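/- Let 0 < ε ≤ r, A ∈ ℝ^{n×n}, B ∈ ℝ^{n×m}, k ∈ ℝ^{m×n}, let d : [0,∞) → [−1,1] be measurable, and let x : [0,∞) → ℝⁿ, u : [−r−ε,∞) → ℝᵐ be continuous functions, locally absolutely continuous on [0,∞), satisfying for almost every t ≥ 0 both ẋ(t) = Ax(t) + Bu(t−r−εd(t)) and u̇(t) = k e^{Ar}(Ax(t) + Bu(t−r−εd(t)) − Bu(t−r)) + kA ∫_{−r}^{0} e^{−As} B u(t+s) ds + k B u(t). If the initial compatibility condition u(0) = k e^{Ar} x(0) + k ∫_{−r}^{0} e^{−As} B u(s) ds holds, then u(t) = k e^{Ar} x(t) + k ∫_{−r}^{0} e^{−As} B u(t+s) ds for all t ≥ 0; that is, the set S := {(x,u) : u(0) = k e^{Ar} x + k ∫_{−r}^{0} e^{−As} B u(s) ds} is positively invariant. -/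

import Mathlib

open MeasureTheory

/-- Matrix-vector multiplication between Euclidean spaces. -/
noncomputable def mv {n m : ℕ} (A : Matrix (Fin n) (Fin m) ℝ)
    (x : EuclideanSpace ℝ (Fin m)) : EuclideanSpace ℝ (Fin n) :=
  Matrix.toEuclideanLin A x

/-- `mexp A t = exp (t A)`, the matrix exponential. -/
noncomputable def mexp {n : ℕ} (A : Matrix (Fin n) (Fin n) ℝ) (t : ℝ) :
    Matrix (Fin n) (Fin n) ℝ :=
  NormedSpace.exp (t • A)

noncomputable def clmOf {n m : ℕ} :
    Matrix (Fin n) (Fin m) ℝ →ₗ[ℝ]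
      (EuclideanSpace ℝ (Fin m) →L[ℝ] EuclideanSpace ℝ (Fin n)) :=
  (LinearMap.toContinuousLinearMap.toLinearMap).comp (Matrix.toEuclideanLin.toLinearMap)

lemma mv_eq_clmOf {n m : ℕ} (A : Matrix (Fin n) (Fin m) ℝ) (v : EuclideanSpace ℝ (Fin m)) :
    mv A v = clmOf A v := rfl

lemma clmOf_eq_toEuclideanCLM {n : ℕ} (M : Matrix (Fin n) (Fin n) ℝ) :
    clmOf M = Matrix.toEuclideanCLM (𝕜 := ℝ) M := by
  ext v; rfl

open scoped Matrix.Norms.L2Operator in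
lemma clmOf_mexp {n : ℕ} (A : Matrix (Fin n) (Fin n) ℝ) (t : ℝ) :
    clmOf (mexp A t) = NormedSpace.exp (t • clmOf A) := by
  have hcont : Continuous (Matrix.toEuclideanCLM (𝕜 := ℝ) (n := Fin n)) := by
    have he : ⇑(Matrix.toEuclideanCLM (𝕜 := ℝ) (n := Fin n)) = fun M => clmOf M := by
      funext M; exact (clmOf_eq_toEuclideanCLM M).symm
    rw [he]
    exact LinearMap.continuous_of_finiteDimensional (clmOf (n := n) (m := n))
  letI : NormedAlgebra ℚ (Matrix (Fin n) (Fin n) ℝ) := .restrictScalars ℚ ℝ _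
  rw [clmOf_eq_toEuclideanCLM, mexp,
    NormedSpace.map_exp (Matrix.toEuclideanCLM (𝕜 := ℝ) (n := Fin n)) hcont]
  rw [← clmOf_eq_toEuclideanCLM, _root_.map_smul]

set_option synthInstance.maxHeartbeats 1000000
set_option maxHeartbeats 4000000

theorem key {n m : ℕ}
    (a : EuclideanSpace ℝ (Fin n) →L[ℝ] EuclideanSpace ℝ (Fin n))
    (Bc : EuclideanSpace ℝ (Fin m) →L[ℝ] EuclideanSpace ℝ (Fin n))
    (K : EuclideanSpace ℝ (Fin n) →L[ℝ] EuclideanSpace ℝ (Fin m))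
    (r ε : ℝ) (hε : 0 < ε) (hεr : ε ≤ r)
    (d : ℝ → ℝ) (hd : Measurable d) (hd1 : ∀ t, 0 ≤ t → d t ∈ Set.Icc (-1 : ℝ) 1)
    (x : ℝ → EuclideanSpace ℝ (Fin n)) (u : ℝ → EuclideanSpace ℝ (Fin m))
    (hxc : ContinuousOn x (Set.Ici 0))
    (huc : ContinuousOn u (Set.Ici (-(r + ε))))
    (hplant : ∀ t : ℝ, 0 ≤ t →
      x t = x 0 + ∫ s in (0:ℝ)..t,
        (a (x s) + Bc (u (s - r - ε * d s))))
    (hufb : ∀ t : ℝ, 0 ≤ t →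
      u t = u 0 + ∫ s in (0:ℝ)..t,
        (K (NormedSpace.exp (r • a)
            (a (x s) + Bc (u (s - r - ε * d s)) - Bc (u (s - r)))) +
          K (a (∫ w in (-r:ℝ)..0, NormedSpace.exp ((-w) • a) (Bc (u (s + w))))) +
          K (Bc (u s))))
    (hcompat : u 0 = K (NormedSpace.exp (r • a) (x 0)) +
      K (∫ s in (-r:ℝ)..0, NormedSpace.exp ((-s) • a) (Bc (u s)))) :
    ∀ t : ℝ, 0 ≤ t →
      u t = K (NormedSpace.exp (r • a) (x t)) +
        K (∫ s in (-r:ℝ)..0, NormedSpace.exp ((-s) • a) (Bc (u (t + s)))) := by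
  letI : NormedAlgebra ℚ (EuclideanSpace ℝ (Fin n) →L[ℝ] EuclideanSpace ℝ (Fin n)) :=
    .restrictScalars ℚ ℝ _
  have hr : (0:ℝ) < r := lt_of_lt_of_le hε hεr
  set c : ℝ := -(r + ε) with hc
  set v : ℝ → EuclideanSpace ℝ (Fin m) := fun s => u (max s c) with hv
  have hvcont : Continuous v := by
    apply huc.comp_continuous (continuous_id.max continuous_const)
    intro s; exact Set.mem_Ici.2 (le_max_right _ _)
  have hvu : ∀ s : ℝ, c ≤ s → v s = u s := by
    intro s hs; simp only [hv, max_eq_left hs]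
  set y : ℝ → EuclideanSpace ℝ (Fin n) := fun s => x (max s 0) with hy
  have hycont : Continuous y := by
    apply hxc.comp_continuous (continuous_id.max continuous_const)
    intro s; exact Set.mem_Ici.2 (le_max_right _ _)
  have hyx : ∀ s : ℝ, 0 ≤ s → y s = x s := by
    intro s hs; simp only [hy, max_eq_left hs]
  -- the exponential semigroup
  set e : ℝ → (EuclideanSpace ℝ (Fin n) →L[ℝ] EuclideanSpace ℝ (Fin n)) :=
    fun s => NormedSpace.exp (s • a) with he
  have eadd : ∀ p q : ℝ, e p * e q = e (p + q) := by
    intro p q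
    have hcomm : Commute (p • a) (q • a) := by
      show (p • a) * (q • a) = (q • a) * (p • a)
      ext w
      simp [ContinuousLinearMap.smul_apply, ContinuousLinearMap.mul_apply, _root_.map_smul]
      ring
    show NormedSpace.exp (p • a) * NormedSpace.exp (q • a) = NormedSpace.exp ((p + q) • a)
    rw [add_smul p q a]
    exact (NormedSpace.exp_add_of_commute hcomm).symm
  have e0 : e 0 = 1 := by
    show NormedSpace.exp ((0:ℝ) • a) = 1
    rw [show ((0:ℝ) • a) = 0 from zero_smul ℝ a]
    exact NormedSpace.exp_zero
  have hecont : Continuous e :=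
    NormedSpace.exp_continuous.comp (continuous_id.smul continuous_const)
  set h : ℝ → EuclideanSpace ℝ (Fin n) := fun σ => e (-σ) (Bc (v σ)) with hh
  have hhcont : Continuous h :=
    (hecont.comp continuous_neg).clm_apply (Bc.continuous.comp hvcont)
  set G : ℝ → EuclideanSpace ℝ (Fin n) := fun s => ∫ σ in (0:ℝ)..s, h σ with hG
  have hGd : ∀ s : ℝ, HasDerivAt G (h s) s := by
    intro s
    exact intervalIntegral.integral_hasDerivAt_right (hhcont.intervalIntegrable _ _)
      (hhcont.stronglyMeasurable.aestronglyMeasurable.stronglyMeasurableAtFilter)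
      hhcont.continuousAt
  set F : ℝ → EuclideanSpace ℝ (Fin n) := fun s => e s (G s - G (s - r)) with hF
  -- Claim A: the delayed integral equals F
  have claimA : ∀ t : ℝ, 0 ≤ t →
      (∫ w in (-r:ℝ)..0, NormedSpace.exp ((-w) • a) (Bc (u (t + w)))) = F t := by
    intro t ht
    have h1 : (∫ w in (-r:ℝ)..0, NormedSpace.exp ((-w) • a) (Bc (u (t + w)))) =
        ∫ w in (-r:ℝ)..0, (fun σ => e t (h σ)) (w + t) := by
      apply intervalIntegral.integral_congr
      intro w hw
      rw [Set.uIcc_of_le (by linarith : (-r:ℝ) ≤ 0), Set.mem_Icc] at hw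
      have hwc : c ≤ w + t := by simp only [hc]; linarith
      simp only [hh]
      rw [hvu (w + t) hwc]
      have hmul : e t (e (-(w+t)) (Bc (u (w + t)))) = (e t * e (-(w+t))) (Bc (u (w + t))) := rfl
      rw [hmul, eadd]
      have harg : t + -(w + t) = -w := by ring
      rw [harg]
      have harg2 : w + t = t + w := by ring
      rw [harg2]
    rw [h1, intervalIntegral.integral_comp_add_right (fun σ => e t (h σ)) t]
    have h2 : (∫ σ in (-r + t)..(0 + t), e t (h σ)) = e t (∫ σ in (-r + t)..(0 + t), h σ) :=
      (e t).intervalIntegral_comp_comm (hhcont.intervalIntegrable _ _)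
    rw [h2]
    have h3 : (∫ σ in (-r + t)..(0 + t), h σ) = G (0 + t) - G (-r + t) := by
      rw [hG]
      exact (intervalIntegral.integral_interval_sub_left
        (hhcont.intervalIntegrable _ _) (hhcont.intervalIntegrable _ _)).symm
    rw [h3, hF]
    have hz : (0:ℝ) + t = t := by ring
    rw [hz]
    have hz2 : -r + t = t - r := by ring
    rw [hz2]
  -- Claim B: derivative of F
  have hFd : ∀ s : ℝ, HasDerivAt F (a (F s) + Bc (v s) - e r (Bc (v (s - r)))) s := by
    intro s
    have h' : HasDerivAt (fun z : ℝ => z - r) 1 s := by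
      simpa using (hasDerivAt_id s).sub_const r
    have hGd2 : HasDerivAt (fun z : ℝ => G (z - r)) (h (s - r)) s := by
      exact (hGd (s - r)).comp_sub_const s r
    have hE : HasDerivAt e (a * e s) s := hasDerivAt_exp_smul_const' (𝕂 := ℝ) a s
    have hcomb : HasDerivAt F ((a * e s) (G s - G (s - r)) + e s (h s - h (s - r))) s :=
      hE.clm_apply ((hGd s).sub hGd2)
    have h2 : e s (h s) = Bc (v s) := by
      have hss : e s (h s) = (e s * e (-s)) (Bc (v s)) := rfl
      rw [hss, eadd, add_neg_cancel, e0, ContinuousLinearMap.one_apply]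
    have h3 : e s (h (s - r)) = e r (Bc (v (s - r))) := by
      have hss : e s (h (s - r)) = (e s * e (-(s - r))) (Bc (v (s - r))) := rfl
      rw [hss, eadd]
      have hz : s + -(s - r) = r := by ring
      rw [hz]
    have hval : (a * e s) (G s - G (s - r)) + e s (h s - h (s - r))
        = a (F s) + Bc (v s) - e r (Bc (v (s - r))) := by
      have h1 : (a * e s) (G s - G (s - r)) = a (F s) := rfl
      rw [h1, map_sub (e s), h2, h3]
      abel
    rw [hval] at hcomb
    exact hcomb
  have hFcont : Continuous F := continuous_iff_continuousAt.2 fun s => (hFd s).continuousAt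
  set ψ : ℝ → EuclideanSpace ℝ (Fin n) :=
    fun s => a (F s) + Bc (v s) - e r (Bc (v (s - r))) with hψ
  have hψcont : Continuous ψ := by
    apply Continuous.sub
    · exact (a.continuous.comp hFcont).add (Bc.continuous.comp hvcont)
    · exact (e r).continuous.comp
        (Bc.continuous.comp (hvcont.comp (continuous_id.sub continuous_const)))
  have claimC : ∀ t : ℝ, F t - F 0 = ∫ s in (0:ℝ)..t, ψ s := by
    intro t
    exact (intervalIntegral.integral_eq_sub_of_hasDerivAt (fun s _ => hFd s)
      (hψcont.intervalIntegrable _ _)).symm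
  -- now fix t
  intro t ht
  have harg : ∀ s : ℝ, 0 ≤ s → c ≤ s - r - ε * d s := by
    intro s hs
    have h1 := (hd1 s hs).1
    have h2 := (hd1 s hs).2
    have h3 : ε * d s ≤ ε := by nlinarith
    have h4 : -ε ≤ ε * d s := by nlinarith
    simp only [hc]; linarith
  set f : ℝ → EuclideanSpace ℝ (Fin n) :=
    fun s => a (y s) + Bc (v (s - r - ε * d s)) with hf
  have hfint : IntervalIntegrable f volume 0 t := by
    apply IntervalIntegrable.add
    · exact (a.continuous.comp hycont).intervalIntegrable _ _
    · rw [intervalIntegrable_iff]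
      obtain ⟨C, hC⟩ := (isCompact_Icc (a := c) (b := t)).exists_bound_of_continuousOn
        hvcont.continuousOn
      have hmeas : Measurable fun s => Bc (v (s - r - ε * d s)) := by
        apply (Bc.continuous.comp hvcont).measurable.comp
        exact (measurable_id.sub measurable_const).sub (measurable_const.mul hd)
      apply Integrable.mono' (g := fun _ => ‖Bc‖ * C)
      · refine integrableOn_const ?_
        rw [Set.uIoc_of_le ht]
        exact measure_Ioc_lt_top.ne
      · exact hmeas.stronglyMeasurable.aestronglyMeasurable
      · filter_upwards [ae_restrict_mem measurableSet_uIoc] with s hs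
        rw [Set.uIoc_of_le ht] at hs
        have hs0 : 0 ≤ s := le_of_lt hs.1
        have hd1s := hd1 s hs0
        have hcs : c ≤ s - r - ε * d s := harg s hs0
        have h4 : -ε ≤ ε * d s := by nlinarith [hd1s.1]
        have hts : s - r - ε * d s ≤ t := by linarith [hs.2]
        calc ‖Bc (v (s - r - ε * d s))‖ ≤ ‖Bc‖ * ‖v (s - r - ε * d s)‖ := Bc.le_opNorm _
          _ ≤ ‖Bc‖ * C := by
              apply mul_le_mul_of_nonneg_left _ (norm_nonneg _)
              exact hC _ (Set.mem_Icc.2 ⟨hcs, hts⟩)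
  -- rewritten plant dynamics
  have hplant' : x t = x 0 + ∫ s in (0:ℝ)..t, f s := by
    rw [hplant t ht]
    congr 1
    apply intervalIntegral.integral_congr
    intro s hs
    rw [Set.uIcc_of_le ht, Set.mem_Icc] at hs
    simp only [hf]
    rw [hyx s hs.1, hvu _ (harg s hs.1)]
  -- rewritten feedback dynamics
  have hufb' : u t = u 0 + ∫ s in (0:ℝ)..t,
      (K (e r (f s - Bc (v (s - r)))) + K (a (F s)) + K (Bc (v s))) := by
    rw [hufb t ht]
    congr 1
    apply intervalIntegral.integral_congr
    intro s hs
    rw [Set.uIcc_of_le ht, Set.mem_Icc] at hs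
    beta_reduce
    have h1 : u (s - r - ε * d s) = v (s - r - ε * d s) := (hvu _ (harg s hs.1)).symm
    have h2 : u (s - r) = v (s - r) := (hvu _ (by simp only [hc]; linarith [hs.1] : c ≤ s - r)).symm
    have h3 : u s = v s := (hvu _ (by simp only [hc]; linarith [hs.1] : c ≤ s)).symm
    have h4 : (∫ w in (-r:ℝ)..0, NormedSpace.exp ((-w) • a) (Bc (u (s + w)))) = F s :=
      claimA s hs.1
    rw [h4, h1, h2, h3]
    simp only [hf]
    rw [hyx s hs.1]
  -- rewritten compatibility
  have h0 : (∫ s in (-r:ℝ)..0, NormedSpace.exp ((-s) • a) (Bc (u s))) = F 0 := by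
    rw [← claimA 0 le_rfl]
    apply intervalIntegral.integral_congr
    intro w _
    simp only [zero_add]
  have hcompat' : u 0 = K (e r (x 0)) + K (F 0) := by
    rw [hcompat, h0]
  -- integrabilities
  have hint1 : IntervalIntegrable (fun s => (K.comp (e r)) (f s)) volume 0 t := by
    rw [intervalIntegrable_iff] at hfint ⊢
    exact (K.comp (e r)).integrable_comp hfint
  have hint2 : IntervalIntegrable (fun s => K (ψ s)) volume 0 t :=
    (K.continuous.comp hψcont).intervalIntegrable _ _
  have hxsub : (∫ s in (0:ℝ)..t, f s) = x t - x 0 := by rw [hplant']; abel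
  -- final computation
  rw [claimA t ht, hufb']
  calc u 0 + ∫ s in (0:ℝ)..t, (K (e r (f s - Bc (v (s - r)))) + K (a (F s)) + K (Bc (v s)))
      = u 0 + ∫ s in (0:ℝ)..t, ((K.comp (e r)) (f s) + K (ψ s)) := by
        congr 1
        apply intervalIntegral.integral_congr
        intro s _
        simp only [ContinuousLinearMap.comp_apply, hψ, map_sub, map_add]
        abel
    _ = u 0 + ((∫ s in (0:ℝ)..t, (K.comp (e r)) (f s)) + ∫ s in (0:ℝ)..t, K (ψ s)) := by
        rw [intervalIntegral.integral_add hint1 hint2]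
    _ = (K (e r (x 0)) + K (F 0)) +
        (((K.comp (e r)) (x t) - (K.comp (e r)) (x 0)) + (K (F t) - K (F 0))) := by
        rw [hcompat']
        congr 1
        congr 1
        · rw [(K.comp (e r)).intervalIntegral_comp_comm hfint, hxsub, map_sub]
        · rw [K.intervalIntegral_comp_comm (hψcont.intervalIntegrable _ _),
            ← claimC t, map_sub]
    _ = K (e r (x t)) + K (F t) := by
        simp only [ContinuousLinearMap.comp_apply]
        abel

theorem stmt_18 (n m : ℕ) (A : Matrix (Fin n) (Fin n) ℝ)
    (B : Matrix (Fin n) (Fin m) ℝ) (k : Matrix (Fin m) (Fin n) ℝ)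
    (r ε : ℝ) (hε : 0 < ε) (hεr : ε ≤ r)
    (d : ℝ → ℝ) (hd : Measurable d) (hd1 : ∀ t, 0 ≤ t → d t ∈ Set.Icc (-1 : ℝ) 1)
    (x : ℝ → EuclideanSpace ℝ (Fin n)) (u : ℝ → EuclideanSpace ℝ (Fin m))
    (hxc : ContinuousOn x (Set.Ici 0))
    (huc : ContinuousOn u (Set.Ici (-(r + ε))))
    -- the plant dynamics
    (hplant : ∀ t : ℝ, 0 ≤ t →
      x t = x 0 + ∫ s in (0 : ℝ)..t, (mv A (x s) + mv B (u (s - r - ε * d s))))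
    -- the differentiated predictor feedback dynamics
    (hufb : ∀ t : ℝ, 0 ≤ t →
      u t = u 0 + ∫ s in (0 : ℝ)..t,
        (mv k (mv (mexp A r)
            (mv A (x s) + mv B (u (s - r - ε * d s)) - mv B (u (s - r)))) +
          mv k (mv A (∫ w in (-r : ℝ)..0, mv (mexp A (-w)) (mv B (u (s + w))))) +
          mv k (mv B (u s))))
    -- initial compatibility condition
    (hcompat : u 0 = mv k (mv (mexp A r) (x 0)) +
      mv k (∫ s in (-r : ℝ)..0, mv (mexp A (-s)) (mv B (u s)))) :
    -- positive invariance of the set `S`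
    ∀ t : ℝ, 0 ≤ t →
      u t = mv k (mv (mexp A r) (x t)) +
        mv k (∫ s in (-r : ℝ)..0, mv (mexp A (-s)) (mv B (u (t + s)))) := by
  simp only [mv_eq_clmOf, clmOf_mexp] at hplant hufb hcompat ⊢
  exact key (clmOf A) (clmOf B) (clmOf k) r ε hε hεr d hd hd1 x u hxc huc hplant hufb hcompat
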